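/- Let 0 ≠ x ∈ ℝ^{n₁⋯n_r} be decomposable as x = x₁ ⊗ ⋯ ⊗ x_r with x_i ∈ ℝ^{n_i}, and let a be the first nonzero entry of x. Then there exists a unique decomposition x = a · (y₁ ⊗ ⋯ ⊗ y_r) where each y_i ∈ ℝ^{n_i} is monic, i.e., the first nonzero entry of each y_i equals 1. -/

import Mathlib

open Matrix

/-- Row/left component of a lexicographic index in `Fin (a*b)`. -/
def fdiv {a b : ℕ} (k : Fin (a * b)) : Fin a :=
  ⟨(k : ℕ) / b, Nat.div_lt_of_lt_mul (Nat.mul_comm a b ▸ k.isLt)⟩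

/-- Right component of a lexicographic index in `Fin (a*b)`. -/
def fmod {a b : ℕ} (k : Fin (a * b)) : Fin b :=
  ⟨(k : ℕ) % b, Nat.mod_lt _ (Nat.pos_of_ne_zero (by rintro rfl; exact absurd k.isLt (by simp)))⟩

/-- Kronecker product of column vectors (lexicographic order of indices). -/
def vKron {m n : ℕ} (x : Fin m → ℝ) (y : Fin n → ℝ) : Fin (m * n) → ℝ :=
  fun k => x (fdiv k) * y (fmod k)

/-- Kronecker product of matrices, with `Fin`-indexed dimensions. -/
def mKron {m n p q : ℕ} (A : Matrix (Fin m) (Fin n) ℝ) (B : Matrix (Fin p) (Fin q) ℝ) :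
    Matrix (Fin (m * p)) (Fin (n * q)) ℝ :=
  fun i j => A (fdiv i) (fdiv j) * B (fmod i) (fmod j)

/-- Semi-tensor product of matrices: A ⋉ B = (A ⊗ I_{t/n})(B ⊗ I_{t/p}), t = lcm n p. -/
def stp {m n p q : ℕ} (A : Matrix (Fin m) (Fin n) ℝ) (B : Matrix (Fin p) (Fin q) ℝ) :
    Matrix (Fin (m * (Nat.lcm n p / n))) (Fin (q * (Nat.lcm n p / p))) ℝ :=
  mKron A (1 : Matrix (Fin (Nat.lcm n p / n)) (Fin (Nat.lcm n p / n)) ℝ) *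
    (Matrix.reindex (finCongr (by
        rw [Nat.mul_div_cancel' (Nat.dvd_lcm_right n p),
          Nat.mul_div_cancel' (Nat.dvd_lcm_left n p)])) (Equiv.refl _)
      (mKron B (1 : Matrix (Fin (Nat.lcm n p / p)) (Fin (Nat.lcm n p / p)) ℝ)))

/-- The swap matrix W_{[m,n]}: sends x ⊗ y to y ⊗ x. -/
def swapM (m n : ℕ) : Matrix (Fin (n * m)) (Fin (m * n)) ℝ :=
  fun i j => if (i : ℕ) = (fmod j : ℕ) * m + (fdiv j : ℕ) then 1 else 0

/-- Column-stacking vectorization of a matrix. -/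
def vecc {m n : ℕ} (A : Matrix (Fin m) (Fin n) ℝ) : Fin (n * m) → ℝ :=
  fun k => A (fmod k) (fdiv k)

/-- Iterated Kronecker product of column vectors. -/
def kronD : (d : ℕ) → (n : Fin d → ℕ) → ((i : Fin d) → Fin (n i) → ℝ) → Fin (∏ i, n i) → ℝ
  | 0, _, _ => fun _ => 1
  | d + 1, n, x => fun k =>
      vKron (x 0) (kronD d (fun i => n i.succ) (fun i => x i.succ))
        (Fin.cast (by rw [Fin.prod_univ_succ]) k)

/-- Lexicographic encoding of a multi-index into a single natural number. -/
def encode : (d : ℕ) → (n : Fin d → ℕ) → ((i : Fin d) → Fin (n i)) → ℕ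
  | 0, _, _ => 0
  | d + 1, n, f =>
      (f 0 : ℕ) * (∏ i : Fin d, n i.succ) + encode d (fun i => n i.succ) (fun i => f i.succ)

theorem encode_lt : ∀ (d : ℕ) (n : Fin d → ℕ) (f : (i : Fin d) → Fin (n i)),
    encode d n f < ∏ i, n i := by
  intro d
  induction d with
  | zero => intro n f; simp [encode]
  | succ d ih =>
    intro n f
    rw [Fin.prod_univ_succ]
    have h1 := ih (fun i => n i.succ) (fun i => f i.succ)
    have h2 := (f 0).isLt
    calc (f 0 : ℕ) * (∏ i : Fin d, n i.succ)
        + encode d (fun i => n i.succ) (fun i => f i.succ)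
        < (f 0 : ℕ) * (∏ i : Fin d, n i.succ) + (∏ i : Fin d, n i.succ) :=
          Nat.add_lt_add_left h1 _
      _ = ((f 0 : ℕ) + 1) * (∏ i : Fin d, n i.succ) := by ring
      _ ≤ n 0 * (∏ i : Fin d, n i.succ) := Nat.mul_le_mul_right _ h2

/-- The MDA projection map Ξ_i determined by the head multi-index e. -/
def proj (d : ℕ) (n : Fin d → ℕ) (e : (i : Fin d) → Fin (n i)) (i : Fin d)
    (x : Fin (∏ j, n j) → ℝ) : Fin (n i) → ℝ :=
  fun k => x ⟨encode d n (Function.update e i k), encode_lt d n _⟩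

/-- A vector is monic if its first nonzero entry equals 1. -/
def Monic {N : ℕ} (v : Fin N → ℝ) : Prop :=
  ∃ e : Fin N, v e = 1 ∧ ∀ j : Fin N, j < e → v j = 0
section Aux

lemma head_exists {N : ℕ} (v : Fin N → ℝ) (hv : v ≠ 0) :
    ∃ e : Fin N, v e ≠ 0 ∧ ∀ j, j < e → v j = 0 := by
  have hs : (Finset.univ.filter (fun i => v i ≠ 0)).Nonempty := by
    by_contra h
    apply hv
    funext i
    by_contra hvi
    exact h ⟨i, Finset.mem_filter.2 ⟨Finset.mem_univ _, hvi⟩⟩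
  refine ⟨(Finset.univ.filter (fun i => v i ≠ 0)).min' hs, ?_, ?_⟩
  · have := Finset.min'_mem _ hs
    exact (Finset.mem_filter.1 this).2
  · intro j hj
    by_contra hvj
    have hjmem : j ∈ Finset.univ.filter (fun i => v i ≠ 0) :=
      Finset.mem_filter.2 ⟨Finset.mem_univ _, hvj⟩
    exact absurd (Finset.min'_le _ _ hjmem) (not_le.2 hj)

lemma head_unique {N : ℕ} {v : Fin N → ℝ} {e e' : Fin N}
    (h1 : v e ≠ 0) (h2 : ∀ j, j < e → v j = 0)
    (h1' : v e' ≠ 0) (h2' : ∀ j, j < e' → v j = 0) : e = e' := by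
  rcases lt_trichotomy e e' with h | h | h
  · exact absurd (h2' e h) h1
  · exact h
  · exact absurd (h2 e' h) h1'

lemma kronD_eq_zero : ∀ (d : ℕ) (n : Fin d → ℕ) (y : (i : Fin d) → Fin (n i) → ℝ)
    (i₀ : Fin d), y i₀ = 0 → kronD d n y = 0 := by
  intro d
  induction d with
  | zero => intro n y i₀ _; exact i₀.elim0
  | succ d ih =>
    intro n y i₀ h
    funext k
    show vKron (y 0) _ _ = 0
    rcases Fin.eq_zero_or_eq_succ i₀ with rfl | ⟨j, rfl⟩
    · show y 0 _ * _ = (0 : ℝ)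
      rw [h]; simp
    · show _ * kronD d _ _ _ = (0 : ℝ)
      rw [ih (fun i => n i.succ) (fun i => y i.succ) j h]; simp

lemma kronD_smul : ∀ (d : ℕ) (n : Fin d → ℕ) (c : Fin d → ℝ)
    (y : (i : Fin d) → Fin (n i) → ℝ),
    kronD d n (fun i => c i • y i) = (∏ i, c i) • kronD d n y := by
  intro d
  induction d with
  | zero => intro n c y; funext k; simp [kronD]
  | succ d ih =>
    intro n c y
    funext k
    show vKron ((fun i => c i • y i) 0) (kronD d _ (fun i => c i.succ • y i.succ)) _ = _
    rw [ih (fun i => n i.succ) (fun i => c i.succ) (fun i => y i.succ)]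
    show (c 0 • y 0) _ * ((∏ i : Fin d, c i.succ) • kronD d _ _) _
      = (∏ i, c i) * (y 0 _ * kronD d _ _ _)
    rw [Fin.prod_univ_succ c]
    simp only [Pi.smul_apply, smul_eq_mul]
    ring

lemma vKron_apply_mk {m N : ℕ} (u : Fin m → ℝ) (v : Fin N → ℝ) (i : Fin m) (j : Fin N)
    (hk : (i : ℕ) * N + (j : ℕ) < m * N) :
    vKron u v ⟨(i : ℕ) * N + (j : ℕ), hk⟩ = u i * v j := by
  have hN : 0 < N := j.pos
  have hd : (fdiv (⟨(i : ℕ) * N + (j : ℕ), hk⟩ : Fin (m * N)) : ℕ) = (i : ℕ) := by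
    show ((i : ℕ) * N + (j : ℕ)) / N = (i : ℕ)
    rw [Nat.mul_comm (i : ℕ) N, Nat.mul_add_div hN, Nat.div_eq_of_lt j.isLt]
    omega
  have hm : (fmod (⟨(i : ℕ) * N + (j : ℕ), hk⟩ : Fin (m * N)) : ℕ) = (j : ℕ) := by
    show ((i : ℕ) * N + (j : ℕ)) % N = (j : ℕ)
    rw [Nat.add_comm, Nat.add_mul_mod_self_right, Nat.mod_eq_of_lt j.isLt]
  show u (fdiv _) * v (fmod _) = u i * v j
  rw [Fin.ext hd, Fin.ext hm]

lemma head_lt_mul {m N : ℕ} (e : Fin m) (f : Fin N) : (e : ℕ) * N + (f : ℕ) < m * N := by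
  have h1 := e.isLt; have h2 := f.isLt; nlinarith

lemma vKron_head {m N : ℕ} (u : Fin m → ℝ) (v : Fin N → ℝ) (e : Fin m) (f : Fin N)
    (hu : ∀ j, j < e → u j = 0) (hv : ∀ j, j < f → v j = 0) :
    ∀ k : Fin (m * N), (k : ℕ) < (e : ℕ) * N + (f : ℕ) → vKron u v k = 0 := by
  have hN : 0 < N := f.pos
  intro k hk
  show u (fdiv k) * v (fmod k) = 0
  have hdm : (k : ℕ) / N * N + (k : ℕ) % N = (k : ℕ) := Nat.div_add_mod' _ _
  have hmod : (k : ℕ) % N < N := Nat.mod_lt _ hN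
  rcases lt_trichotomy ((k : ℕ) / N) (e : ℕ) with h | h | h
  · rw [hu (fdiv k) h]; ring
  · have : (k : ℕ) % N < (f : ℕ) := by rw [h] at hdm; omega
    rw [hv (fmod k) this]; ring
  · exfalso
    have h2 : ((e : ℕ) + 1) * N ≤ (k : ℕ) / N * N :=
      Nat.mul_le_mul_right N (Nat.succ_le_of_lt h)
    have h3 : (e : ℕ) * N + N = ((e : ℕ) + 1) * N := by ring
    omega

lemma kronD_head : ∀ (d : ℕ) (n : Fin d → ℕ) (y : (i : Fin d) → Fin (n i) → ℝ)
    (e : (i : Fin d) → Fin (n i)), (∀ i, ∀ j, j < e i → y i j = 0) →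
    (kronD d n y ⟨encode d n e, encode_lt d n e⟩ = ∏ i, y i (e i)) ∧
    (∀ k : Fin (∏ i, n i), (k : ℕ) < encode d n e → kronD d n y k = 0) := by
  intro d
  induction d with
  | zero =>
    intro n y e _
    constructor
    · simp [kronD]
    · intro k hk; simp [encode] at hk
  | succ d ih =>
    intro n y e hbelow
    obtain ⟨ih1, ih2⟩ := ih (fun i => n i.succ) (fun i => y i.succ) (fun i => e i.succ)
      (fun i => hbelow i.succ)
    have hE := encode_lt d (fun i => n i.succ) (fun i => e i.succ)
    constructor
    · show vKron (y 0) _ _ = _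
      have : (Fin.cast (by rw [Fin.prod_univ_succ])
          (⟨encode (d+1) n e, encode_lt (d+1) n e⟩ : Fin (∏ i, n i)) :
          Fin (n 0 * ∏ i : Fin d, n i.succ))
          = ⟨(e 0 : ℕ) * (∏ i : Fin d, n i.succ)
              + (⟨encode d (fun i => n i.succ) (fun i => e i.succ), hE⟩ : Fin _),
            head_lt_mul (e 0) ⟨_, hE⟩⟩ := by
        apply Fin.ext; simp [encode]
      rw [this, vKron_apply_mk, ih1, Fin.prod_univ_succ (fun i => y i (e i))]
    · intro k hk
      show vKron (y 0) _ _ = 0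
      exact vKron_head (y 0) _ (e 0) ⟨_, hE⟩ (hbelow 0) (fun j hj => ih2 j hj) _
        (by simpa [encode] using hk)

lemma vKron_monic_inj {m N : ℕ} {u u' : Fin m → ℝ} {v v' : Fin N → ℝ}
    (hu : Monic u) (hu' : Monic u') (hv : Monic v) (hv' : Monic v')
    (h : vKron u v = vKron u' v') : u = u' ∧ v = v' := by
  obtain ⟨e, he1, he2⟩ := hu
  obtain ⟨e', he1', he2'⟩ := hu'
  obtain ⟨f, hf1, hf2⟩ := hv
  obtain ⟨f', hf1', hf2'⟩ := hv'
  have hN : 0 < N := f.pos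
  have hidx : (⟨(e : ℕ) * N + (f : ℕ), head_lt_mul e f⟩ : Fin (m * N))
      = ⟨(e' : ℕ) * N + (f' : ℕ), head_lt_mul e' f'⟩ := by
    apply head_unique (v := vKron u v)
    · rw [vKron_apply_mk, he1, hf1]; norm_num
    · exact vKron_head u v e f he2 hf2
    · rw [h, vKron_apply_mk, he1', hf1']; norm_num
    · intro j hj; rw [h]; exact vKron_head u' v' e' f' he2' hf2' j hj
  have hidx' : (e : ℕ) * N + (f : ℕ) = (e' : ℕ) * N + (f' : ℕ) := congrArg Fin.val hidx
  have hee : e = e' := by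
    apply Fin.ext
    have h1 := f.isLt; have h2 := f'.isLt
    rcases Nat.lt_trichotomy (e : ℕ) (e' : ℕ) with hc | hc | hc
    · exfalso; nlinarith
    · exact hc
    · exfalso; nlinarith
  subst hee
  have hff : f = f' := by apply Fin.ext; omega
  subst hff
  constructor
  · funext k
    have h1 : u k * v f = u' k * v' f := by
      rw [← vKron_apply_mk u v k f (head_lt_mul k f), h, vKron_apply_mk]
    rw [hf1, hf1'] at h1
    simpa using h1
  · funext k
    have h1 : u e * v k = u' e * v' k := by
      rw [← vKron_apply_mk u v e k (head_lt_mul e k), h, vKron_apply_mk]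
    rw [he1, he1'] at h1
    simpa using h1

lemma kronD_monic : ∀ (d : ℕ) (n : Fin d → ℕ) (y : (i : Fin d) → Fin (n i) → ℝ),
    (∀ i, Monic (y i)) → Monic (kronD d n y) := by
  intro d n y hm
  choose e he1 he2 using hm
  obtain ⟨h1, h2⟩ := kronD_head d n y e he2
  refine ⟨⟨encode d n e, encode_lt d n e⟩, ?_, ?_⟩
  · rw [h1]; simp [he1]
  · intro j hj; exact h2 j hj

lemma kronD_monic_inj : ∀ (d : ℕ) (n : Fin d → ℕ) (y y' : (i : Fin d) → Fin (n i) → ℝ),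
    (∀ i, Monic (y i)) → (∀ i, Monic (y' i)) → kronD d n y = kronD d n y' → y = y' := by
  intro d
  induction d with
  | zero => intro n y y' _ _ _; funext i; exact Fin.elim0 i
  | succ d ih =>
    intro n y y' hm hm' h
    have hVm : Monic (kronD d (fun i => n i.succ) (fun i => y i.succ)) :=
      kronD_monic d _ _ (fun i => hm i.succ)
    have hVm' : Monic (kronD d (fun i => n i.succ) (fun i => y' i.succ)) :=
      kronD_monic d _ _ (fun i => hm' i.succ)
    have hvk : vKron (y 0) (kronD d (fun i => n i.succ) (fun i => y i.succ))
        = vKron (y' 0) (kronD d (fun i => n i.succ) (fun i => y' i.succ)) := by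
      funext k
      have := congrFun h (Fin.cast (by rw [Fin.prod_univ_succ]) k)
      show vKron (y 0) _ k = vKron (y' 0) _ k
      convert this using 2 <;> rfl
    obtain ⟨h0, hT⟩ := vKron_monic_inj (hm 0) (hm' 0) hVm hVm' hvk
    have htail : (fun i : Fin d => y i.succ) = (fun i : Fin d => y' i.succ) :=
      ih (fun i => n i.succ) _ _ (fun i => hm i.succ) (fun i => hm' i.succ) hT
    funext i
    rcases Fin.eq_zero_or_eq_succ i with rfl | ⟨j, rfl⟩
    · exact h0
    · exact congrFun htail j

end Aux

/-- A nonzero decomposable vector has a unique monic decomposition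
x = a · (y₁ ⊗ ⋯ ⊗ y_r) where a is the head value of x and each yᵢ is monic. -/
theorem unique_monic_decomposition (d : ℕ) (n : Fin d → ℕ)
    (x : Fin (∏ i, n i) → ℝ) (hx : x ≠ 0)
    (hdec : ∃ y : (i : Fin d) → Fin (n i) → ℝ, x = kronD d n y)
    (e : Fin (∏ i, n i)) (a : ℝ) (ha : a ≠ 0)
    (he : x e = a) (hmin : ∀ j : Fin (∏ i, n i), j < e → x j = 0) :
    ∃! y : (i : Fin d) → Fin (n i) → ℝ,
      (∀ i, Monic (y i)) ∧ x = a • kronD d n y := by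
  obtain ⟨y, rfl⟩ := hdec
  have hy : ∀ i, y i ≠ 0 := fun i h0 => hx (kronD_eq_zero d n y i h0)
  choose eh heh1 heh2 using fun i => head_exists (y i) (hy i)
  obtain ⟨hh1, hh2⟩ := kronD_head d n y eh heh2
  set c : Fin d → ℝ := fun i => y i (eh i) with hc
  have hcprod : (∏ i, c i) ≠ 0 := Finset.prod_ne_zero_iff.2 (fun i _ => heh1 i)
  -- identify the head index
  have heq : e = ⟨encode d n eh, encode_lt d n eh⟩ := by
    apply head_unique (v := kronD d n y)
    · rw [he]; exact ha
    · exact hmin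
    · rw [hh1]; exact hcprod
    · intro j hj; exact hh2 j hj
  have haprod : a = ∏ i, c i := by rw [← he, heq, hh1]
  -- the monic decomposition
  refine ⟨fun i => (c i)⁻¹ • y i, ⟨?_, ?_⟩, ?_⟩
  · intro i
    refine ⟨eh i, ?_, ?_⟩
    · simp only [Pi.smul_apply, smul_eq_mul]
      exact inv_mul_cancel₀ (heh1 i)
    · intro j hj
      simp only [Pi.smul_apply, smul_eq_mul, heh2 i j hj, mul_zero]
  · rw [kronD_smul d n (fun i => (c i)⁻¹) y]
    rw [smul_smul, haprod, ← Finset.prod_mul_distrib]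
    have : ∀ i ∈ Finset.univ, c i * (c i)⁻¹ = 1 := by
      intro i _
      exact mul_inv_cancel₀ (heh1 i)
    rw [Finset.prod_congr rfl this, Finset.prod_const_one, one_smul]
  · rintro z ⟨hzm, hzx⟩
    -- kronD z = kronD (our candidate)
    have hmon : ∀ i, Monic ((fun i => (c i)⁻¹ • y i) i) := by
      intro i
      refine ⟨eh i, ?_, ?_⟩
      · simp only [Pi.smul_apply, smul_eq_mul]
        exact inv_mul_cancel₀ (heh1 i)
      · intro j hj
        simp only [Pi.smul_apply, smul_eq_mul, heh2 i j hj, mul_zero]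
    apply kronD_monic_inj d n z (fun i => (c i)⁻¹ • y i) hzm hmon
    apply smul_right_injective (Fin (∏ i, n i) → ℝ) ha
    show a • kronD d n z = a • kronD d n (fun i => (c i)⁻¹ • y i)
    rw [← hzx, kronD_smul d n (fun i => (c i)⁻¹) y, smul_smul, haprod,
      ← Finset.prod_mul_distrib]
    have : ∀ i ∈ Finset.univ, c i * (c i)⁻¹ = 1 := by
      intro i _
      exact mul_inv_cancel₀ (heh1 i)
    rw [Finset.prod_congr rfl this, Finset.prod_const_one, one_smul]
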